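/- arXiv:2605.21107 — 5 statements merged into one kernel-verified Lean document; each statement's English description precedes it below -/
import Mathlib

section
/- Let K_0 ⊇ K_1 ⊇ ⋯ ⊇ K_T be a nested sequence of nonempty closed convex subsets of ℝ^d, let x_1 ∈ K_0, let e_1, …, e_T ∈ ℝ^d, and define x_{t+1} = Π_{K_t}(x_t − e_t) for 1 ≤ t ≤ T. Then the iterates satisfy the approximate self-contraction property: for all indices 1 ≤ i ≤ j ≤ k ≤ T + 1, ‖x_j − x_k‖ ≤ ‖x_i − x_k‖ + Σ_{r=i}^{j−1} ‖e_r‖, where ‖·‖ is the Euclidean norm. -/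
open scoped RealInnerProductSpace

lemma norm_proj_le_aux {E : Type*} [NormedAddCommGroup E] [InnerProductSpace ℝ E]
    (z p y : E) (h : ⟪z - p, y - p⟫ ≤ 0) : ‖p - y‖ ≤ ‖z - y‖ := by
  have e1 : z - y = (z - p) + (p - y) := by abel
  have h2 : ‖p - y‖ ^ 2 ≤ ‖z - y‖ ^ 2 := by
    rw [e1, norm_add_sq_real]
    have e2 : ⟪z - p, p - y⟫ = -⟪z - p, y - p⟫ := by
      rw [← inner_neg_right]; congr 1; abel
    nlinarith [sq_nonneg ‖z - p‖]
  nlinarith [norm_nonneg (p - y), norm_nonneg (z - y)]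

/-- Approximate self-contraction property of perturbed nested projection iterates. -/
theorem perturbed_nested_projection_approx_self_contracted (d T : ℕ)
    (K : ℕ → Set (EuclideanSpace ℝ (Fin d)))
    (x e : ℕ → EuclideanSpace ℝ (Fin d))
    (hKne : ∀ t, t ≤ T → (K t).Nonempty)
    (hKcl : ∀ t, t ≤ T → IsClosed (K t))
    (hKcv : ∀ t, t ≤ T → Convex ℝ (K t))
    (hKnest : ∀ t, t < T → K (t + 1) ⊆ K t)
    (hx1 : x 1 ∈ K 0)
    (hproj : ∀ t, 1 ≤ t → t ≤ T → x (t + 1) ∈ K t ∧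
      ∀ y ∈ K t, ⟪(x t - e t) - x (t + 1), y - x (t + 1)⟫ ≤ 0) :
    ∀ i j k, 1 ≤ i → i ≤ j → j ≤ k → k ≤ T + 1 →
      ‖x j - x k‖ ≤ ‖x i - x k‖ + ∑ r ∈ Finset.Ico i j, ‖e r‖ := by
  have antitone : ∀ s t, s ≤ t → t ≤ T → K t ⊆ K s := by
    intro s t hst
    induction t, hst using Nat.le_induction with
    | base => intro _; exact subset_rfl
    | succ t hst ih =>
      intro htT
      exact (hKnest t (by omega)).trans (ih (by omega))
  intro i j k hi hij hjk hkT
  induction j, hij using Nat.le_induction with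
  | base => simp
  | succ j hij ih =>
    have hj1 : 1 ≤ j := le_trans hi hij
    have hjT : j ≤ T := by omega
    obtain ⟨hmem, hineq⟩ := hproj j hj1 hjT
    have hxk : x k ∈ K j := by
      have hk2 : 1 ≤ k - 1 := by omega
      have hx : x (k - 1 + 1) ∈ K (k - 1) := (hproj (k - 1) hk2 (by omega)).1
      have hk : k - 1 + 1 = k := by omega
      rw [hk] at hx
      exact antitone j (k - 1) (by omega) (by omega) hx
    have step : ‖x (j + 1) - x k‖ ≤ ‖(x j - e j) - x k‖ :=
      norm_proj_le_aux _ _ _ (hineq (x k) hxk)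
    have tri : ‖(x j - e j) - x k‖ ≤ ‖x j - x k‖ + ‖e j‖ := by
      have e3 : (x j - e j) - x k = (x j - x k) + (-(e j)) := by abel
      rw [e3]
      calc ‖(x j - x k) + (-(e j))‖ ≤ ‖x j - x k‖ + ‖-(e j)‖ := norm_add_le _ _
        _ = ‖x j - x k‖ + ‖e j‖ := by rw [norm_neg]
    have sumeq : ∑ r ∈ Finset.Ico i (j + 1), ‖e r‖
        = (∑ r ∈ Finset.Ico i j, ‖e r‖) + ‖e j‖ := Finset.sum_Ico_succ_top hij _
    have ih' := ih (by omega)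
    rw [sumeq]
    linarith
end

section
/- Let x_1, …, x_{T+1} ∈ ℝ^d and e_1, …, e_T ∈ ℝ^d satisfy the approximate self-contraction property: for all 1 ≤ i ≤ j ≤ k ≤ T + 1, ‖x_j − x_k‖₂ ≤ ‖x_i − x_k‖₂ + Σ_{r=i}^{j−1} ‖e_r‖₂. Define tail budgets R_t = Σ_{r=t}^{T} ‖e_r‖₂ for 1 ≤ t ≤ T and R_{T+1} = 0, and lifted points A_t = (x_t, R_t) ∈ ℝ^d × ℝ. Then the sequence A_1, …, A_{T+1} is self-contracted with respect to the norm ‖(u, s)‖_⊕ := ‖u‖₂ + |s| on ℝ^d × ℝ; that is, for all 1 ≤ i ≤ j ≤ k ≤ T + 1, ‖A_k − A_j‖_⊕ ≤ ‖A_k − A_i‖_⊕. -/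
/-- The lifted sequence `A_t = (x_t, R_t)` is self-contracted with respect to the
norm `‖(u, s)‖_⊕ = ‖u‖₂ + |s|` on `ℝ^d × ℝ`, whenever the `x_t` satisfy the approximate
self-contraction property with perturbations `e_t`. -/
theorem lifted_sequence_self_contracted (d T : ℕ)
    (x e : ℕ → EuclideanSpace ℝ (Fin d))
    (happrox : ∀ i j k, 1 ≤ i → i ≤ j → j ≤ k → k ≤ T + 1 →
      ‖x j - x k‖ ≤ ‖x i - x k‖ + ∑ r ∈ Finset.Ico i j, ‖e r‖)
    (R : ℕ → ℝ)
    (hR : ∀ t, 1 ≤ t → t ≤ T + 1 → R t = ∑ r ∈ Finset.Icc t T, ‖e r‖) :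
    ∀ i j k, 1 ≤ i → i ≤ j → j ≤ k → k ≤ T + 1 →
      ‖x k - x j‖ + |R k - R j| ≤ ‖x k - x i‖ + |R k - R i| := by
  have key : ∀ a b, 1 ≤ a → a ≤ b → b ≤ T + 1 →
      R a - R b = ∑ r ∈ Finset.Ico a b, ‖e r‖ := by
    intro a b ha hab hb
    rw [hR a ha (hab.trans hb), hR b (ha.trans hab) hb]
    rw [show Finset.Icc a T = Finset.Ico a (T+1) by rw [Finset.Ico_add_one_right_eq_Icc],
        show Finset.Icc b T = Finset.Ico b (T+1) by rw [Finset.Ico_add_one_right_eq_Icc]]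
    rw [← Finset.sum_Ico_consecutive _ hab hb]
    ring
  intro i j k hi hij hjk hk
  have hRij := key i j hi hij (hjk.trans hk)
  have hRjk := key j k (hi.trans hij) hjk hk
  have hRik := key i k hi (hij.trans hjk) hk
  have hjk0 : 0 ≤ R j - R k := by
    rw [hRjk]; exact Finset.sum_nonneg fun r _ => norm_nonneg _
  have hik0 : 0 ≤ R i - R k := by
    rw [hRik]; exact Finset.sum_nonneg fun r _ => norm_nonneg _
  rw [abs_of_nonpos (by linarith), abs_of_nonpos (by linarith)]
  have h := happrox i j k hi hij hjk hk
  rw [norm_sub_rev (x j), norm_sub_rev (x i)] at h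
  have : R i - R k = (R i - R j) + (R j - R k) := by ring
  have hIJ : R i - R j = ∑ r ∈ Finset.Ico i j, ‖e r‖ := hRij
  linarith
end

section
/- Let K_0 ⊇ K_1 ⊇ ⋯ ⊇ K_T be a nested sequence of nonempty closed convex subsets of ℝ^d, let x_1 ∈ K_0, and define the unperturbed nested projection iterates x_{t+1} = Π_{K_t}(x_t) for 1 ≤ t ≤ T. Then the sequence x_1, …, x_{T+1} is self-contracted with respect to the Euclidean norm: for all 1 ≤ i ≤ j ≤ k ≤ T + 1, ‖x_j − x_k‖ ≤ ‖x_i − x_k‖. -/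
open scoped RealInnerProductSpace

/-- Unperturbed nested projection iterates are self-contracted for the Euclidean norm. -/
theorem nested_projection_self_contracted (d T : ℕ)
    (K : ℕ → Set (EuclideanSpace ℝ (Fin d)))
    (x : ℕ → EuclideanSpace ℝ (Fin d))
    (hKne : ∀ t, t ≤ T → (K t).Nonempty)
    (hKcl : ∀ t, t ≤ T → IsClosed (K t))
    (hKcv : ∀ t, t ≤ T → Convex ℝ (K t))
    (hKnest : ∀ t, t < T → K (t + 1) ⊆ K t)
    (hx1 : x 1 ∈ K 0)
    (hproj : ∀ t, 1 ≤ t → t ≤ T → x (t + 1) ∈ K t ∧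
      ∀ y ∈ K t, ⟪x t - x (t + 1), y - x (t + 1)⟫ ≤ 0) :
    ∀ i j k, 1 ≤ i → i ≤ j → j ≤ k → k ≤ T + 1 →
      ‖x j - x k‖ ≤ ‖x i - x k‖ := by
  -- antitone chain
  have hanti : ∀ t m, t ≤ m → m ≤ T → K m ⊆ K t := by
    intro t m htm
    induction m, htm using Nat.le_induction with
    | base => intro _; exact fun _ h => h
    | succ m hm ih =>
      intro hmT
      exact fun y hy => ih (le_of_lt hmT) (hKnest m hmT hy)
  -- membership of later iterates in earlier sets
  have hmem : ∀ t k, 1 ≤ t → t < k → k ≤ T + 1 → x k ∈ K t := by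
    intro t k ht htk hkT
    obtain ⟨m, rfl⟩ : ∃ m, k = m + 1 := ⟨k - 1, (Nat.succ_pred_eq_of_pos (by omega)).symm⟩
    have hmT : m ≤ T := by omega
    have hm1 : 1 ≤ m := by omega
    exact hanti t m (by omega) hmT (hproj m hm1 hmT).1
  -- one-step contraction
  have hstep : ∀ t k, 1 ≤ t → t < k → k ≤ T + 1 →
      ‖x (t + 1) - x k‖ ≤ ‖x t - x k‖ := by
    intro t k ht htk hkT
    have htT : t ≤ T := by omega
    have hxk : x k ∈ K t := hmem t k ht htk hkT
    have hip : ⟪x t - x (t + 1), x k - x (t + 1)⟫ ≤ 0 :=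
      (hproj t ht htT).2 (x k) hxk
    set u := x t - x (t + 1) with hu
    set v := x (t + 1) - x k with hv
    have huv : x t - x k = u + v := by rw [hu, hv]; abel
    have hip2 : 0 ≤ ⟪u, v⟫ := by
      have : v = -(x k - x (t + 1)) := by rw [hv]; abel
      rw [this, inner_neg_right]
      linarith
    have hexp : ‖x t - x k‖ ^ 2 = ‖u‖ ^ 2 + 2 * ⟪u, v⟫ + ‖v‖ ^ 2 := by
      rw [huv, ← real_inner_self_eq_norm_sq, real_inner_add_add_self,
        real_inner_self_eq_norm_sq, real_inner_self_eq_norm_sq]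
    have hsq : ‖v‖ ^ 2 ≤ ‖x t - x k‖ ^ 2 := by
      rw [hexp]; nlinarith [norm_nonneg u]
    nlinarith [norm_nonneg v, norm_nonneg (x t - x k)]
  intro i j k hi hij hjk hkT
  induction j, hij using Nat.le_induction with
  | base => exact le_refl _
  | succ j hij ih =>
    have hjk' : j ≤ k := by omega
    calc ‖x (j + 1) - x k‖ ≤ ‖x j - x k‖ :=
          hstep j k (by omega) (by omega) hkT
      _ ≤ ‖x i - x k‖ := ih hjk'
end

section
/- Let S ⊆ 𝒳 ⊆ ℝ^d with S nonempty, closed and convex, 𝒳 convex. Let x ∈ 𝒳, let η > 0, H ≥ 0, G ≥ 0, let f : ℝ^d → ℝ, and let h ∈ ℝ^d satisfy ‖h‖ ≤ G and f(y) ≥ f(x) + ⟨h, y − x⟩ + (H/2)‖y − x‖² for all y ∈ 𝒳. Set x⁺ = Π_S(x − η h). Then for every x* ∈ S ∩ 𝒳: f(x) − f(x*) ≤ (1/2)(1/η − H)‖x − x*‖² − (1/(2η))‖x⁺ − x*‖² + (η/2)G². -/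
open scoped RealInnerProductSpace

/-- One-step descent inequality for a projected (sub)gradient step with
strong-convexity parameter `H`. -/
theorem projected_subgradient_step_descent (d : ℕ)
    (X S : Set (EuclideanSpace ℝ (Fin d)))
    (hSne : S.Nonempty) (hScl : IsClosed S) (hScv : Convex ℝ S)
    (hXcv : Convex ℝ X) (hSX : S ⊆ X)
    (x : EuclideanSpace ℝ (Fin d)) (hx : x ∈ X)
    (η H G : ℝ) (hη : 0 < η) (hH : 0 ≤ H) (hG : 0 ≤ G)
    (f : EuclideanSpace ℝ (Fin d) → ℝ)
    (h : EuclideanSpace ℝ (Fin d)) (hh : ‖h‖ ≤ G)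
    (hsub : ∀ y ∈ X, f y ≥ f x + ⟪h, y - x⟫ + H / 2 * ‖y - x‖ ^ 2)
    (xp : EuclideanSpace ℝ (Fin d)) (hxp : xp ∈ S)
    (hproj : ∀ y ∈ S, ⟪(x - η • h) - xp, y - xp⟫ ≤ 0)
    (xstar : EuclideanSpace ℝ (Fin d)) (hxstar : xstar ∈ S ∩ X) :
    f x - f xstar ≤ 1 / 2 * (1 / η - H) * ‖x - xstar‖ ^ 2
      - 1 / (2 * η) * ‖xp - xstar‖ ^ 2 + η / 2 * G ^ 2 := by
  have h1 := hsub xstar hxstar.2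
  have h2 := hproj xstar hxstar.1
  -- key: ‖xp - xstar‖² ≤ ‖(x - η•h) - xstar‖²
  have key : ‖xp - xstar‖ ^ 2 ≤ ‖(x - η • h) - xstar‖ ^ 2 := by
    have expand : ‖(x - η • h) - xstar‖ ^ 2
        = ‖(x - η • h) - xp‖ ^ 2 + ‖xstar - xp‖ ^ 2
          - 2 * ⟪(x - η • h) - xp, xstar - xp⟫ := by
      have : (x - η • h) - xstar = ((x - η • h) - xp) - (xstar - xp) := by abel
      rw [this, @norm_sub_sq_real]
      ring
    rw [norm_sub_rev xstar xp] at expand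
    nlinarith [sq_nonneg ‖(x - η • h) - xp‖]
  -- expand RHS of key
  have expand2 : ‖(x - η • h) - xstar‖ ^ 2
      = ‖x - xstar‖ ^ 2 - 2 * η * ⟪h, x - xstar⟫ + η ^ 2 * ‖h‖ ^ 2 := by
    have : (x - η • h) - xstar = (x - xstar) - η • h := by abel
    rw [this, @norm_sub_sq_real, real_inner_smul_right, norm_smul,
      real_inner_comm]
    simp [abs_of_pos hη]
    ring
  have hi : ⟪h, xstar - x⟫ = - ⟪h, x - xstar⟫ := by
    rw [← inner_neg_right]
    congr 1
    abel
  have hns : ‖xstar - x‖ = ‖x - xstar‖ := norm_sub_rev _ _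
  have hh2 : ‖h‖ ^ 2 ≤ G ^ 2 := by
    have := norm_nonneg h
    nlinarith
  rw [hi, hns] at h1
  rw [expand2] at key
  have hne : η ≠ 0 := ne_of_gt hη
  have target : 2 * η * (f x - f xstar) ≤ η * (1 / η - H) * ‖x - xstar‖ ^ 2
      - ‖xp - xstar‖ ^ 2 + η ^ 2 * G ^ 2 := by
    have hid : η * (1 / η - H) = 1 - η * H := by field_simp
    rw [hid]
    nlinarith [key, h1, hh2, hη.le, mul_nonneg hη.le (mul_nonneg hH (sq_nonneg ‖x - xstar‖))]
  calc f x - f xstar = (2 * η * (f x - f xstar)) / (2 * η) := by field_simp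
    _ ≤ (η * (1 / η - H) * ‖x - xstar‖ ^ 2 - ‖xp - xstar‖ ^ 2 + η ^ 2 * G ^ 2) / (2 * η) := by
        gcongr
    _ = 1 / 2 * (1 / η - H) * ‖x - xstar‖ ^ 2 - 1 / (2 * η) * ‖xp - xstar‖ ^ 2 + η / 2 * G ^ 2 := by
        field_simp
end

section
/- Let 𝒳 ⊆ ℝ^d be a nonempty closed convex set of diameter at most D > 0, and let G > 0. For t = 1, …, T, let S_t be nonempty closed convex subsets with 𝒳 = S_0 ⊇ S_1 ⊇ ⋯ ⊇ S_T, let f_t : ℝ^d → ℝ, and let h_t ∈ ℝ^d satisfy ‖h_t‖ ≤ G and f_t(y) ≥ f_t(x_t) + ⟨h_t, y − x_t⟩ for all y ∈ 𝒳. Run Nested Projected OGD with step sizes η_t = D/(G√t): x_1 ∈ 𝒳 and x_{t+1} = Π_{S_t}(x_t − η_t h_t). Then for every x* ∈ S_T: Σ_{t=1}^{T} (f_t(x_t) − f_t(x*)) ≤ (3/2) · G · D · √T. -/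
open scoped RealInnerProductSpace

lemma sum_inv_sqrt_le (T : ℕ) :
    ∑ t ∈ Finset.Icc 1 T, (1 / Real.sqrt t) ≤ 2 * Real.sqrt T := by
  induction T with
  | zero => simp
  | succ n ih =>
    rw [Finset.sum_Icc_succ_top (by omega)]
    have h1 : Real.sqrt n ≤ Real.sqrt (n + 1 : ℕ) :=
      Real.sqrt_le_sqrt (by push_cast; linarith)
    have h2 : 0 < Real.sqrt ((n + 1 : ℕ) : ℝ) := Real.sqrt_pos.2 (by positivity)
    have h3 : Real.sqrt ((n + 1 : ℕ) : ℝ) ^ 2 = ((n + 1 : ℕ) : ℝ) :=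
      Real.sq_sqrt (by positivity)
    have h5 : 0 ≤ Real.sqrt (n : ℝ) := Real.sqrt_nonneg _
    have h6 : 1 / Real.sqrt ((n + 1 : ℕ) : ℝ) ≤
        2 * (Real.sqrt ((n + 1 : ℕ) : ℝ) - Real.sqrt n) := by
      rw [div_le_iff₀ h2]
      have h7 : ((n + 1 : ℕ) : ℝ) = (n : ℝ) + 1 := by push_cast; ring
      nlinarith [sq_nonneg (Real.sqrt ((n + 1 : ℕ) : ℝ) - Real.sqrt n),
        Real.sq_sqrt (show (0:ℝ) ≤ n by positivity)]
    linarith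

lemma abel_bound (a b : ℕ → ℝ) (Dsq : ℝ) (n : ℕ)
    (hb0 : b 0 = 0)
    (hbmono : ∀ t, t < n → b t ≤ b (t + 1))
    (ha : ∀ t, 1 ≤ t → t ≤ n + 1 → a t ≤ Dsq) :
    ∑ t ∈ Finset.Icc 1 n, (a t - a (t + 1)) * b t ≤ (Dsq - a (n + 1)) * b n := by
  induction n with
  | zero => simp [hb0]
  | succ m ih =>
    rw [Finset.sum_Icc_succ_top (by omega)]
    have h1 := ih (fun t ht => hbmono t (by omega)) (fun t h1 h2 => ha t h1 (by omega))
    have h2 : b m ≤ b (m + 1) := hbmono m (by omega)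
    have h3 : a (m + 1) ≤ Dsq := ha (m + 1) (by omega) (by omega)
    nlinarith

lemma step_ineq {E : Type*} [NormedAddCommGroup E] [InnerProductSpace ℝ E]
    (z p w : E) (hp : ⟪z - p, w - p⟫ ≤ 0) : ‖p - w‖ ^ 2 ≤ ‖z - w‖ ^ 2 := by
  have h1 : ‖z - w‖ ^ 2 = ‖z - p‖ ^ 2 + 2 * ⟪z - p, p - w⟫ + ‖p - w‖ ^ 2 := by
    have := norm_add_sq_real (z - p) (p - w)
    rw [show z - p + (p - w) = z - w by abel] at this
    exact this
  have h2 : ⟪z - p, p - w⟫ = -⟪z - p, w - p⟫ := by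
    rw [show p - w = -(w - p) by abel, inner_neg_right]
  nlinarith [sq_nonneg ‖z - p‖]

lemma expand_sq {E : Type*} [NormedAddCommGroup E] [InnerProductSpace ℝ E]
    (u v w : E) (c : ℝ) :
    ‖(u - c • v) - w‖ ^ 2 = ‖u - w‖ ^ 2 - 2 * c * ⟪v, u - w⟫ + c ^ 2 * ‖v‖ ^ 2 := by
  have h1 : (u - c • v) - w = (u - w) - c • v := by abel
  rw [h1, norm_sub_sq_real, real_inner_smul_right, norm_smul, real_inner_comm]
  simp [mul_pow, sq_abs]
  ring

lemma arith_step (Δ I s D G : ℝ) (hs : 0 < s) (hD : 0 < D) (hG : 0 < G)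
    (h : 2 * (D / (G * s)) * I ≤ Δ + (D / (G * s)) ^ 2 * G ^ 2) :
    I ≤ Δ * (G * s / D) / 2 + G * D / (2 * s) := by
  have key : I ≤ (Δ + (D / (G * s)) ^ 2 * G ^ 2) / (2 * (D / (G * s))) := by
    rw [le_div_iff₀ (by positivity)]
    nlinarith
  refine key.trans (le_of_eq ?_)
  field_simp

/-- Regret bound for Nested Projected OGD with step sizes `η_t = D/(G√t)`
for convex losses: the regret is at most `(3/2) G D √T`. -/
theorem np_ogd_regret_convex (d T : ℕ) (D G : ℝ) (hD : 0 < D) (hG : 0 < G)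
    (X : Set (EuclideanSpace ℝ (Fin d)))
    (hXne : X.Nonempty) (hXcl : IsClosed X) (hXcv : Convex ℝ X)
    (hXdiam : ∀ u ∈ X, ∀ v ∈ X, ‖u - v‖ ≤ D)
    (S : ℕ → Set (EuclideanSpace ℝ (Fin d)))
    (hS0 : S 0 = X)
    (hSne : ∀ t, t ≤ T → (S t).Nonempty)
    (hScl : ∀ t, t ≤ T → IsClosed (S t))
    (hScv : ∀ t, t ≤ T → Convex ℝ (S t))
    (hSnest : ∀ t, t < T → S (t + 1) ⊆ S t)
    (f : ℕ → EuclideanSpace ℝ (Fin d) → ℝ)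
    (h x : ℕ → EuclideanSpace ℝ (Fin d))
    (hh : ∀ t, 1 ≤ t → t ≤ T → ‖h t‖ ≤ G)
    (hsub : ∀ t, 1 ≤ t → t ≤ T → ∀ y ∈ X,
      f t y ≥ f t (x t) + ⟪h t, y - x t⟫)
    (hx1 : x 1 ∈ X)
    (hproj : ∀ t, 1 ≤ t → t ≤ T → x (t + 1) ∈ S t ∧
      ∀ y ∈ S t, ⟪(x t - (D / (G * Real.sqrt t)) • h t) - x (t + 1),
        y - x (t + 1)⟫ ≤ 0)
    (xstar : EuclideanSpace ℝ (Fin d)) (hxstar : xstar ∈ S T) :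
    ∑ t ∈ Finset.Icc 1 T, (f t (x t) - f t xstar) ≤
      3 / 2 * G * D * Real.sqrt T := by
  have hmono : ∀ t, t ≤ T → ∀ s, s ≤ t → S t ⊆ S s := by
    intro t
    induction t with
    | zero =>
      intro _ s hs
      have : s = 0 := Nat.le_zero.mp hs
      subst this; exact subset_rfl
    | succ n ih =>
      intro ht s hs
      rcases Nat.eq_or_lt_of_le hs with h' | h'
      · subst h'; exact subset_rfl
      · exact (hSnest n (by omega)).trans (ih (by omega) s (by omega))
  have hSX : ∀ t, t ≤ T → S t ⊆ X := fun t ht => hS0 ▸ hmono t ht 0 (Nat.zero_le _)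
  have hxstarS : ∀ t, t ≤ T → xstar ∈ S t := fun t ht => hmono T le_rfl t ht hxstar
  have hxstarX : xstar ∈ X := hSX T le_rfl hxstar
  have hxX : ∀ t, 1 ≤ t → t ≤ T + 1 → x t ∈ X := by
    intro t h1 h2
    obtain ⟨s, rfl⟩ : ∃ s, t = s + 1 := ⟨t - 1, by omega⟩
    rcases Nat.eq_zero_or_pos s with hs | hs
    · subst hs; exact hx1
    · exact hSX s (by omega) (hproj s hs (by omega)).1
  set a : ℕ → ℝ := fun t => ‖x t - xstar‖ ^ 2 with ha_def
  set b : ℕ → ℝ := fun t => G * Real.sqrt t / D with hb_def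
  have ha0 : ∀ t, 0 ≤ a t := fun t => sq_nonneg _
  have haD : ∀ t, 1 ≤ t → t ≤ T + 1 → a t ≤ D ^ 2 := by
    intro t h1 h2
    have hd := hXdiam (x t) (hxX t h1 h2) xstar hxstarX
    have hn : (0:ℝ) ≤ ‖x t - xstar‖ := norm_nonneg _
    simp only [ha_def]
    nlinarith
  have key : ∀ t ∈ Finset.Icc 1 T,
      f t (x t) - f t xstar ≤ (a t - a (t + 1)) * b t / 2 + G * D / (2 * Real.sqrt t) := by
    intro t ht
    obtain ⟨ht1, ht2⟩ := Finset.mem_Icc.mp ht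
    have hst : (0:ℝ) < Real.sqrt t := Real.sqrt_pos.2 (by exact_mod_cast Nat.pos_of_ne_zero (by omega))
    have hproj' := (hproj t ht1 ht2).2 xstar (hxstarS t ht2)
    have hcontr : ‖x (t + 1) - xstar‖ ^ 2 ≤
        ‖(x t - (D / (G * Real.sqrt t)) • h t) - xstar‖ ^ 2 :=
      step_ineq _ _ _ hproj'
    have hexp := expand_sq (x t) (h t) xstar (D / (G * Real.sqrt t))
    have hH : ‖h t‖ ^ 2 ≤ G ^ 2 := by nlinarith [hh t ht1 ht2, norm_nonneg (h t)]
    have hI : f t (x t) - f t xstar ≤ ⟪h t, x t - xstar⟫ := by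
      have h1 := hsub t ht1 ht2 xstar hxstarX
      rw [show xstar - x t = -(x t - xstar) by abel, inner_neg_right] at h1
      linarith
    have hcomb : 2 * (D / (G * Real.sqrt t)) * ⟪h t, x t - xstar⟫ ≤
        (a t - a (t + 1)) + (D / (G * Real.sqrt t)) ^ 2 * G ^ 2 := by
      rw [hexp] at hcontr
      simp only [ha_def]
      nlinarith [sq_nonneg (D / (G * Real.sqrt t))]
    have harith := arith_step (a t - a (t + 1)) ⟪h t, x t - xstar⟫ (Real.sqrt t) D G hst hD hG hcomb
    have hbt : b t = G * Real.sqrt t / D := by simp only [hb_def]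
    rw [hbt]
    linarith
  have hb0' : b 0 = 0 := by simp [hb_def]
  have hbmono' : ∀ t, t < T → b t ≤ b (t + 1) := by
    intro t _
    simp only [hb_def]
    have h9 : Real.sqrt (t : ℝ) ≤ Real.sqrt ((t + 1 : ℕ) : ℝ) :=
      Real.sqrt_le_sqrt (by push_cast; linarith)
    gcongr
  have hbT : 0 ≤ b T := by simp only [hb_def]; positivity
  have habel := abel_bound a b (D ^ 2) T hb0' hbmono' haD
  have hsum := sum_inv_sqrt_le T
  calc ∑ t ∈ Finset.Icc 1 T, (f t (x t) - f t xstar)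
      ≤ ∑ t ∈ Finset.Icc 1 T, ((a t - a (t + 1)) * b t / 2 + G * D / (2 * Real.sqrt t)) :=
        Finset.sum_le_sum key
    _ = (∑ t ∈ Finset.Icc 1 T, (a t - a (t + 1)) * b t) / 2
        + (G * D / 2) * ∑ t ∈ Finset.Icc 1 T, (1 / Real.sqrt t) := by
        rw [Finset.sum_add_distrib, ← Finset.sum_div, Finset.mul_sum]
        congr 1
        refine Finset.sum_congr rfl fun t _ => ?_
        ring
    _ ≤ (D ^ 2 - a (T + 1)) * b T / 2 + (G * D / 2) * (2 * Real.sqrt T) := by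
        have hGD : (0:ℝ) ≤ G * D / 2 := by positivity
        exact add_le_add (by linarith) (mul_le_mul_of_nonneg_left hsum hGD)
    _ ≤ D ^ 2 * b T / 2 + G * D * Real.sqrt T := by
        nlinarith [mul_nonneg (ha0 (T + 1)) hbT]
    _ = 3 / 2 * G * D * Real.sqrt T := by
        simp only [hb_def]
        field_simp
        ring
end
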